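/- For every integer n ≥ 4 there exists a probability distribution D in D_2(n, binom(n,3)) (i.e., with m = binom(n,3) clauses) such that Pr_{C∼D}[SAT(C)] ≥ 1 − binom(n,3)^{−1}. -/

import Mathlib

open scoped Classical

/-- A literal over `n` Boolean variables: a (variable, sign) pair. -/
abbrev Lit (n : ℕ) := Fin n × Bool

/-- A clause: a set of three literals whose three variables are pairwise distinct. -/
abbrev Clause (n : ℕ) :=
  {s : Finset (Lit n) // s.card = 3 ∧ (s.image Prod.fst).card = 3}

/-- A 3-SAT instance: a sequence of `m` clauses over `n` variables. -/
abbrev SatInstance (n m : ℕ) := Fin m → Clause n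

/-- The assignment `σ` makes at least one literal of clause `c` true. -/
def Satisfies {n : ℕ} (σ : Fin n → Bool) (c : Clause n) : Prop :=
  ∃ ℓ ∈ c.1, σ ℓ.1 = ℓ.2

/-- The instance `C` is satisfiable. -/
def SAT {n m : ℕ} (C : SatInstance n m) : Prop :=
  ∃ σ : Fin n → Bool, ∀ i, Satisfies σ (C i)

/-- Probability of the event `P` under the distribution (weight function) `D`. -/
noncomputable def pr {α : Type*} [Fintype α] (D : α → ℝ) (P : α → Prop) : ℝ :=
  ∑ a ∈ Finset.univ.filter P, D a

/-- `D` is a probability distribution on the finite type `α`. -/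
def IsDistribution {α : Type*} [Fintype α] (D : α → ℝ) : Prop :=
  (∀ a, 0 ≤ D a) ∧ ∑ a, D a = 1

/-- The clauses of a random instance drawn from `D` are `k`-wise independent with
uniform marginals: any `k` clauses at distinct positions are jointly uniform,
each over the `M = 8 * (n choose 3)` possible clauses.
`IsDistribution D ∧ KWiseUniform n m k D` says `D ∈ 𝔇_k(n,m)`. -/
def KWiseUniform (n m k : ℕ) (D : SatInstance n m → ℝ) : Prop :=
  ∀ idx : Fin k → Fin m, Function.Injective idx →
    ∀ t : Fin k → Clause n,
      pr D (fun C => ∀ j, C (idx j) = t j) = (1 / (8 * (n.choose 3 : ℝ))) ^ k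

/-- `ξ(C)`: the number of unordered pairs `{i, j}` with `i ≠ j` and `c_i = c_j`. -/
noncomputable def xi {n m : ℕ} (C : SatInstance n m) : ℕ :=
  (Finset.univ.filter fun p : Fin m × Fin m => p.1 < p.2 ∧ C p.1 = C p.2).card

/-- An edge index of the bipartite multigraph `G(C)`: a clause position together with the
literal serving as the right endpoint (the left endpoint is the remaining literal pair). -/
abbrev EdgeIdx (n m : ℕ) := Fin m × Lit n

/-- `e` is an actual edge of the multigraph `G(C)`. -/
def isEdge {n m : ℕ} (C : SatInstance n m) (e : EdgeIdx n m) : Prop :=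
  e.2 ∈ (C e.1).1

/-- The left endpoint (pair of literals) of the edge `e` of `G(C)`. -/
def leftV {n m : ℕ} (C : SatInstance n m) (e : EdgeIdx n m) : Finset (Lit n) :=
  (C e.1).1.erase e.2

/-- `s` is a `K_{2,2}`-edge-set of the multigraph `G(C)`: four edges of the form
`u–v, u–v', u'–v, u'–v'` with `u ≠ u'` and `v ≠ v'`. -/
def IsK22 {n m : ℕ} (C : SatInstance n m) (s : Finset (EdgeIdx n m)) : Prop :=
  s.card = 4 ∧ (∀ e ∈ s, isEdge C e) ∧
  ∃ u u' : Finset (Lit n), ∃ v v' : Lit n, u ≠ u' ∧ v ≠ v' ∧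
    s.image (fun e => (leftV C e, e.2)) = {(u, v), (u, v'), (u', v), (u', v')}

/-- `κ(C)`: the number of `K_{2,2}`-edge-sets of the multigraph `G(C)`. -/
noncomputable def kappa {n m : ℕ} (C : SatInstance n m) : ℕ :=
  (Finset.univ.filter fun s : Finset (EdgeIdx n m) => IsK22 C s).card

/-- Adjacency in the simple bipartite graph `G(C̃)` of a set `T` of distinct clauses:
the literal pair `u` is adjacent to the literal `v`. -/
def adjSet {n : ℕ} (T : Finset (Clause n)) (u : Finset (Lit n)) (v : Lit n) : Prop :=
  v ∉ u ∧ ∃ c ∈ T, c.1 = insert v u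

/-- `κ(C̃)` for a set `T` of pairwise distinct clauses: the number of `K_{2,2}` subgraphs of
the simple bipartite graph `G(C̃)`, computed as `Σ_{{v,v'}} binom(|B_{v,v'}|, 2)`. -/
noncomputable def kappaSet {n : ℕ} (T : Finset (Clause n)) : ℕ :=
  ∑ p ∈ (Finset.univ : Finset (Lit n)).powersetCard 2,
    ((Finset.univ.filter fun u : Finset (Lit n) => ∀ v ∈ p, adjSet T u v).card).choose 2

/-- `m̃(C)`: the number of pairwise distinct clauses occurring in `C`. -/
noncomputable def distinctCount {n m : ℕ} (C : SatInstance n m) : ℕ :=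
  (Finset.univ.image C).card

/-- The set of the three variables of a clause. -/
def clVars {n : ℕ} (c : Clause n) : Finset (Fin n) := c.1.image Prod.fst

/-- `f` lists (the indices of) hyperedges of the variable hypergraph of `C` forming a
Berge path: consecutive hyperedges share exactly one vertex, non-consecutive ones
are disjoint. -/
def IsBergePathOrder {n m : ℕ} (C : SatInstance n m) {k : ℕ} (f : Fin k → Fin m) : Prop :=
  Function.Injective f ∧
  (∀ i j : Fin k, (j : ℕ) = (i : ℕ) + 1 →
    (clVars (C (f i)) ∩ clVars (C (f j))).card = 1) ∧
  (∀ i j : Fin k, i ≠ j → (j : ℕ) ≠ (i : ℕ) + 1 → (i : ℕ) ≠ (j : ℕ) + 1 →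
    Disjoint (clVars (C (f i))) (clVars (C (f j))))

/-- `j` follows `i` cyclically in `Fin ℓ`. -/
def CycConsec (ℓ : ℕ) (i j : Fin ℓ) : Prop := (j : ℕ) = ((i : ℕ) + 1) % ℓ

/-- `f` lists (the indices of) hyperedges of the variable hypergraph of `C` forming a
Berge cycle (of length `ℓ ≥ 3`): cyclically consecutive hyperedges share exactly one
vertex, non-consecutive ones are disjoint. -/
def IsBergeCycleOrder {n m : ℕ} (C : SatInstance n m) {ℓ : ℕ} (f : Fin ℓ → Fin m) : Prop :=
  Function.Injective f ∧
  (∀ i j : Fin ℓ, CycConsec ℓ i j →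
    (clVars (C (f i)) ∩ clVars (C (f j))).card = 1) ∧
  (∀ i j : Fin ℓ, i ≠ j → ¬ CycConsec ℓ i j → ¬ CycConsec ℓ j i →
    Disjoint (clVars (C (f i))) (clVars (C (f j))))

/-- The number of `k`-element sets of hyperedge indices of the variable hypergraph of `C`
that form a Berge path of length `k`. -/
noncomputable def bergePathSetCount (n m k : ℕ) (C : SatInstance n m) : ℕ :=
  (Finset.univ.filter fun s : Finset (Fin m) =>
    s.card = k ∧ ∃ f : Fin k → Fin m, (∀ i, f i ∈ s) ∧ IsBergePathOrder C f).card

/-- The number of `ℓ`-element sets of hyperedge indices of the variable hypergraph of `C`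
that form a Berge cycle of length `ℓ`. -/
noncomputable def bergeCycleSetCount (n m ℓ : ℕ) (C : SatInstance n m) : ℕ :=
  (Finset.univ.filter fun s : Finset (Fin m) =>
    s.card = ℓ ∧ ∃ f : Fin ℓ → Fin m, (∀ i, f i ∈ s) ∧ IsBergeCycleOrder C f).card

section StmtOneAux

open Finset

/-! ### Generic counting lemmas -/

lemma exists_perm_pair {α : Type*} [DecidableEq α] {a b c d : α} (hab : a ≠ b) (hcd : c ≠ d) :
    ∃ g : Equiv.Perm α, g a = c ∧ g b = d := by
  have hb' : Equiv.swap a c b ≠ c := fun h =>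
    hab ((Equiv.swap a c).injective (h.trans (Equiv.swap_apply_left a c).symm)).symm
  refine ⟨(Equiv.swap a c).trans (Equiv.swap (Equiv.swap a c b) d), ?_, ?_⟩
  · simp only [Equiv.trans_apply, Equiv.swap_apply_left]
    exact Equiv.swap_apply_of_ne_of_ne (Ne.symm hb') hcd
  · simp only [Equiv.trans_apply]
    exact Equiv.swap_apply_left _ _

lemma card_perm_fiber_congr {α β : Type*} [Fintype α] [Fintype β] [DecidableEq α] [DecidableEq β]
    (i₁ i₂ : α) {A B A' B' : β} (h : A ≠ B) (h' : A' ≠ B') :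
    Nat.card {π : α ≃ β // π i₁ = A ∧ π i₂ = B}
      = Nat.card {π : α ≃ β // π i₁ = A' ∧ π i₂ = B'} := by
  obtain ⟨g, hg1, hg2⟩ := exists_perm_pair h h'
  apply Nat.card_congr
  refine ⟨fun π => ⟨π.1.trans g, by simp [Equiv.trans_apply, π.2.1, π.2.2, hg1, hg2]⟩,
          fun π => ⟨π.1.trans g.symm, by simp [Equiv.trans_apply, π.2.1, π.2.2, ← hg1, ← hg2]⟩,
          fun π => Subtype.ext (by ext x; simp),
          fun π => Subtype.ext (by ext x; simp)⟩

lemma card_perm_fiber {α β : Type*} [Fintype α] [Fintype β] [DecidableEq α] [DecidableEq β]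
    {i₁ i₂ : α} (hne : i₁ ≠ i₂) {A B : β} (hAB : A ≠ B) :
    Nat.card {π : α ≃ β // π i₁ = A ∧ π i₂ = B}
        * (Nat.card β * Nat.card β - Nat.card β)
      = Nat.card (α ≃ β) := by
  simp only [Nat.card_eq_fintype_card]
  have hmap : ∀ π : α ≃ β, π ∈ (univ : Finset (α ≃ β)) →
      (π i₁, π i₂) ∈ (univ : Finset β).offDiag := fun π _ =>
    Finset.mem_offDiag.2 ⟨mem_univ _, mem_univ _, fun h => hne (π.injective h)⟩
  have hsum := Finset.card_eq_sum_card_fiberwise hmap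
  have hconst : ∀ p ∈ (univ : Finset β).offDiag,
      (univ.filter fun π : α ≃ β => (π i₁, π i₂) = p).card
        = Fintype.card {π : α ≃ β // π i₁ = A ∧ π i₂ = B} := by
    intro p hp
    obtain ⟨-, -, hpneq⟩ := Finset.mem_offDiag.1 hp
    have hfe : (univ.filter fun π : α ≃ β => (π i₁, π i₂) = p)
        = univ.filter (fun π : α ≃ β => π i₁ = p.1 ∧ π i₂ = p.2) :=
      Finset.filter_congr fun π _ => by simp [Prod.ext_iff]
    rw [hfe, ← Fintype.card_subtype, ← Nat.card_eq_fintype_card, ← Nat.card_eq_fintype_card]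
    exact card_perm_fiber_congr i₁ i₂ hpneq hAB
  rw [Finset.sum_congr rfl hconst, Finset.sum_const, smul_eq_mul, Finset.offDiag_card,
    Finset.card_univ, Finset.card_univ] at hsum
  rw [mul_comm] at hsum
  exact hsum.symm

lemma card_pi_two {ι X : Type*} [Fintype ι] [DecidableEq ι] [Fintype X]
    {i₁ i₂ : ι} (hne : i₁ ≠ i₂) (Pa Pb : X → Prop) :
    Nat.card {r : ι → X // Pa (r i₁) ∧ Pb (r i₂)}
      = Nat.card {x // Pa x} * Nat.card {x // Pb x}
          * Nat.card X ^ (Nat.card ι - 2) := by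
  classical
  have e1 : {r : ι → X // Pa (r i₁) ∧ Pb (r i₂)}
      ≃ ∀ i : ι, {x : X // (i = i₁ → Pa x) ∧ (i = i₂ → Pb x)} := by
    refine (Equiv.subtypeEquivRight fun r => ?_).trans Equiv.subtypePiEquivPi
    constructor
    · rintro ⟨h1, h2⟩ i
      exact ⟨fun hi => hi ▸ h1, fun hi => hi ▸ h2⟩
    · intro h
      exact ⟨(h i₁).1 rfl, (h i₂).2 rfl⟩
  rw [Nat.card_congr e1, Nat.card_pi]
  have h2 : i₂ ∈ (univ : Finset ι).erase i₁ := Finset.mem_erase.2 ⟨Ne.symm hne, mem_univ _⟩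
  rw [← Finset.mul_prod_erase _ _ (mem_univ i₁), ← Finset.mul_prod_erase _ _ h2]
  have hA : Nat.card {x : X // (i₁ = i₁ → Pa x) ∧ (i₁ = i₂ → Pb x)}
      = Nat.card {x // Pa x} :=
    Nat.card_congr (Equiv.subtypeEquivRight fun x => by simp [hne])
  have hB : Nat.card {x : X // (i₂ = i₁ → Pa x) ∧ (i₂ = i₂ → Pb x)}
      = Nat.card {x // Pb x} :=
    Nat.card_congr (Equiv.subtypeEquivRight fun x => by simp [Ne.symm hne])
  have hrest : ∀ i ∈ ((univ : Finset ι).erase i₁).erase i₂,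
      Nat.card {x : X // (i = i₁ → Pa x) ∧ (i = i₂ → Pb x)} = Nat.card X := by
    intro i hi
    have h' := Finset.mem_erase.1 hi
    have h'' := Finset.mem_erase.1 h'.2
    exact Nat.card_congr
      (Equiv.subtypeUnivEquiv fun x => ⟨fun h => absurd h h''.1, fun h => absurd h h'.1⟩)
  rw [hA, hB, Finset.prod_congr rfl hrest, Finset.prod_const]
  have hcard : (((univ : Finset ι).erase i₁).erase i₂).card = Nat.card ι - 2 := by
    rw [Finset.card_erase_of_mem h2, Finset.card_erase_of_mem (mem_univ i₁), Finset.card_univ,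
      Nat.card_eq_fintype_card]
    omega
  rw [hcard, mul_assoc]

lemma card_prod_subtype_sigma {α β : Type*} [Fintype α] [Fintype β] (P : α → β → Prop) :
    Nat.card {x : α × β // P x.1 x.2} = ∑ a : α, Nat.card {b : β // P a b} := by
  classical
  rw [Nat.card_congr (Equiv.subtypeProdEquivSigmaSubtype P), Nat.card_eq_fintype_card,
    Fintype.card_sigma]
  exact Finset.sum_congr rfl fun a _ => (Nat.card_eq_fintype_card).symm

end StmtOneAux
section StmtOneAux2

open Finset

/-! ### Parity over `ZMod 2` -/

def zvb (b : Bool) : ZMod 2 := if b then 1 else 0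

lemma zvb_xor (a b : Bool) : zvb (xor a b) = zvb a + zvb b := by
  cases a <;> cases b <;> decide

lemma zvb_not (b : Bool) : zvb (!b) = zvb b + 1 := by cases b <;> decide

def parW {n : ℕ} (W : Finset (Fin n)) (τ : Fin n → Bool) : ZMod 2 := ∑ v ∈ W, zvb (τ v)

lemma parW_flip_mem {n : ℕ} {W : Finset (Fin n)} {u : Fin n} (hu : u ∈ W) (τ : Fin n → Bool) :
    parW W (Function.update τ u (!(τ u))) = parW W τ + 1 := by
  unfold parW
  have h1 : ∀ v ∈ W, zvb (Function.update τ u (!(τ u)) v)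
      = Function.update (fun v => zvb (τ v)) u (zvb (τ u) + 1) v := by
    intro v _
    by_cases hv : v = u
    · subst hv; simp [zvb_not]
    · simp [Function.update_of_ne hv]
  rw [Finset.sum_congr rfl h1, Finset.sum_update_of_mem hu,
    Finset.sum_eq_sum_sdiff_singleton_add hu (fun v => zvb (τ v))]
  ring

lemma parW_flip_not_mem {n : ℕ} {W : Finset (Fin n)} {u : Fin n} (hu : u ∉ W)
    (τ : Fin n → Bool) (x : Bool) :
    parW W (Function.update τ u x) = parW W τ :=
  Finset.sum_congr rfl fun v hv => by
    rw [Function.update_of_ne (fun h => hu (by rwa [h] at hv))]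

def flipAt {n : ℕ} (u : Fin n) : Equiv.Perm (Fin n → Bool) :=
  Function.Involutive.toPerm (fun τ => Function.update τ u (!(τ u))) (by
    intro τ; funext v
    by_cases hv : v = u
    · subst hv; simp
    · simp [Function.update_of_ne hv])

lemma flipAt_apply {n : ℕ} (u : Fin n) (τ : Fin n → Bool) :
    flipAt u τ = Function.update τ u (!(τ u)) := rfl

lemma card_parity_pair {n : ℕ} {W₀ W₁ : Finset (Fin n)} {u w : Fin n}
    (hu0 : u ∈ W₀) (hu1 : u ∉ W₁) (hw1 : w ∈ W₁) (hw0 : w ∉ W₀) (c₀ c₁ : ZMod 2) :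
    4 * Nat.card {τ : Fin n → Bool // parW W₀ τ = c₀ ∧ parW W₁ τ = c₁} = 2 ^ n := by
  classical
  set N : ZMod 2 → ZMod 2 → ℕ :=
    fun c d => Nat.card {τ : Fin n → Bool // parW W₀ τ = c ∧ parW W₁ τ = d} with hN
  have step0 : ∀ c d, N c d = N (c + 1) d := by
    intro c d
    apply Nat.card_congr
    refine Equiv.subtypeEquiv (flipAt u) fun τ => ?_
    rw [flipAt_apply, parW_flip_mem hu0, parW_flip_not_mem hu1, add_left_inj]
  have step1 : ∀ c d, N c d = N c (d + 1) := by
    intro c d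
    apply Nat.card_congr
    refine Equiv.subtypeEquiv (flipAt w) fun τ => ?_
    rw [flipAt_apply, parW_flip_mem hw1, parW_flip_not_mem hw0, add_left_inj]
  have hZ : ∀ x y : ZMod 2, x = y ∨ x = y + 1 := by decide
  have hall : ∀ c d, N c d = N c₀ c₁ := by
    intro c d
    have hc : N c d = N c₀ d := by
      rcases hZ c c₀ with h | h
      · rw [h]
      · rw [h, ← step0]
    rw [hc]
    rcases hZ d c₁ with h | h
    · rw [h]
    · rw [h, ← step1]
  have hmap : ∀ τ : Fin n → Bool, τ ∈ (univ : Finset (Fin n → Bool)) →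
      (parW W₀ τ, parW W₁ τ) ∈ (univ : Finset (ZMod 2 × ZMod 2)) := fun _ _ => mem_univ _
  have hsum := Finset.card_eq_sum_card_fiberwise hmap
  have hfib : ∀ p : ZMod 2 × ZMod 2, p ∈ (univ : Finset (ZMod 2 × ZMod 2)) →
      (univ.filter fun τ : Fin n → Bool => (parW W₀ τ, parW W₁ τ) = p).card = N c₀ c₁ := by
    intro p _
    have hfe : (univ.filter fun τ : Fin n → Bool => (parW W₀ τ, parW W₁ τ) = p)
        = univ.filter (fun τ => parW W₀ τ = p.1 ∧ parW W₁ τ = p.2) :=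
      Finset.filter_congr fun τ _ => by simp [Prod.ext_iff]
    rw [hfe, ← Fintype.card_subtype, ← Nat.card_eq_fintype_card]
    exact hall p.1 p.2
  rw [Finset.sum_congr rfl hfib, Finset.sum_const, smul_eq_mul] at hsum
  have h4 : (univ : Finset (ZMod 2 × ZMod 2)).card = 4 := by decide
  have h2n : (univ : Finset (Fin n → Bool)).card = 2 ^ n := by
    rw [Finset.card_univ, Fintype.card_fun, Fintype.card_bool, Fintype.card_fin]
  rw [h4, h2n] at hsum
  exact hsum.symm

/-! ### Odd-weight sign patterns -/

def pat3 (p : Bool × Bool) : Fin 3 → Bool :=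
  fun q => if q = 0 then p.1 else if q = 1 then p.2 else !(xor p.1 p.2)

lemma card_pat3 : ∀ F : Fin 3 → Bool,
    Fintype.card {p : Bool × Bool // pat3 p = F}
      = if zvb (F 0) + zvb (F 1) + zvb (F 2) = 1 then 1 else 0 := by decide

lemma pat3_has_true : ∀ p : Bool × Bool, ∃ q, pat3 p q = true := by decide

lemma zmod2_add_eq_one (a b : ZMod 2) : a + b = 1 ↔ a = 1 + b := by revert a b; decide

end StmtOneAux2
section StmtOneAux3

open Finset

variable {n : ℕ}

/-! ### Clause API -/

def clSgn (c : Clause n) (v : Fin n) : Bool := decide ((v, true) ∈ c.1)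

lemma clVars_card (c : Clause n) : (clVars c).card = 3 := c.2.2

lemma clause_injOn (c : Clause n) : Set.InjOn Prod.fst (c.1 : Set (Lit n)) :=
  Finset.injOn_of_card_image_eq (by rw [c.2.2, c.2.1])

lemma clSgn_spec (c : Clause n) (v : Fin n) (hv : v ∈ clVars c) : (v, clSgn c v) ∈ c.1 := by
  obtain ⟨⟨v', b⟩, hb, rfl⟩ := Finset.mem_image.1 hv
  by_cases h : (v', true) ∈ c.1
  · simpa [clSgn, h] using h
  · have hb' : b = false := by
      cases b
      · rfl
      · exact absurd hb h
    subst hb'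
    simpa [clSgn, h] using hb

lemma mem_clause_iff (c : Clause n) (v : Fin n) (b : Bool) :
    (v, b) ∈ c.1 ↔ v ∈ clVars c ∧ b = clSgn c v := by
  constructor
  · intro h
    have hv : v ∈ clVars c := Finset.mem_image.2 ⟨(v, b), h, rfl⟩
    refine ⟨hv, ?_⟩
    have h2 := clSgn_spec c v hv
    have := clause_injOn c (Finset.mem_coe.2 h) (Finset.mem_coe.2 h2) rfl
    exact congrArg Prod.snd this
  · rintro ⟨hv, rfl⟩
    exact clSgn_spec c v hv

def mkCl (V : Finset (Fin n)) (hV : V.card = 3) (g : Fin n → Bool) : Clause n :=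
  ⟨V.image fun v => (v, g v), by
    have hinj : Set.InjOn (fun v => (v, g v)) V := fun x _ y _ h => congrArg Prod.fst h
    have hcard : (V.image fun v => (v, g v)).card = 3 := by
      rw [Finset.card_image_of_injOn hinj, hV]
    refine ⟨hcard, ?_⟩
    have himg : (V.image fun v => (v, g v)).image Prod.fst = V := by
      rw [Finset.image_image,
        show (Prod.fst ∘ fun v : Fin n => (v, g v)) = id from rfl, Finset.image_id]
    rw [himg, hV]⟩

lemma mem_mkCl (V : Finset (Fin n)) (hV : V.card = 3) (g : Fin n → Bool) (ℓ : Lit n) :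
    ℓ ∈ (mkCl V hV g).1 ↔ ℓ.1 ∈ V ∧ ℓ.2 = g ℓ.1 := by
  obtain ⟨v, b⟩ := ℓ
  simp only [mkCl, Finset.mem_image]
  constructor
  · rintro ⟨v', hv', h⟩
    obtain ⟨rfl, rfl⟩ : v' = v ∧ g v' = b := by
      constructor
      · exact congrArg Prod.fst h
      · exact congrArg Prod.snd h
    exact ⟨hv', rfl⟩
  · rintro ⟨hv, rfl⟩
    exact ⟨v, hv, rfl⟩

lemma clVars_mkCl (V : Finset (Fin n)) (hV : V.card = 3) (g : Fin n → Bool) :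
    clVars (mkCl V hV g) = V := by
  unfold clVars mkCl
  rw [Finset.image_image,
    show (Prod.fst ∘ fun v : Fin n => (v, g v)) = id from rfl, Finset.image_id]

lemma mkCl_eq_iff (V : Finset (Fin n)) (hV : V.card = 3) (g : Fin n → Bool) (t : Clause n) :
    mkCl V hV g = t ↔ V = clVars t ∧ ∀ v ∈ V, g v = clSgn t v := by
  constructor
  · rintro rfl
    refine ⟨(clVars_mkCl V hV g).symm, fun v hv => ?_⟩
    have hm : (v, g v) ∈ (mkCl V hV g).1 := (mem_mkCl V hV g (v, g v)).2 ⟨hv, rfl⟩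
    exact ((mem_clause_iff _ v (g v)).1 hm).2
  · rintro ⟨hV', hg⟩
    apply Subtype.ext
    apply Finset.ext
    rintro ⟨v, b⟩
    rw [show ((v, b) ∈ (mkCl V hV g).1) ↔ _ from mem_mkCl V hV g (v, b), mem_clause_iff t v b]
    dsimp only
    constructor
    · rintro ⟨hv, rfl⟩
      exact ⟨hV' ▸ hv, hg v hv⟩
    · rintro ⟨hv, rfl⟩
      have hv' : v ∈ V := hV' ▸ hv
      exact ⟨hv', (hg v hv').symm⟩

/-! ### Patterns on a 3-element set -/

def patFun (V : Finset (Fin n)) (hV : V.card = 3) (f : Fin 3 → Bool) : Fin n → Bool :=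
  fun v => if h : v ∈ V then f ((V.orderIsoOfFin hV).symm ⟨v, h⟩) else false

lemma patFun_apply (V : Finset (Fin n)) (hV : V.card = 3) (f : Fin 3 → Bool) (q : Fin 3) :
    patFun V hV f ((V.orderIsoOfFin hV q : Fin n)) = f q := by
  have h : ((V.orderIsoOfFin hV q : Fin n)) ∈ V := (V.orderIsoOfFin hV q).2
  rw [patFun, dif_pos h]
  congr 1
  rw [show (⟨_, h⟩ : {x // x ∈ V}) = V.orderIsoOfFin hV q from Subtype.coe_eta _ _]
  exact OrderIso.symm_apply_apply _ _

lemma forall_patFun_iff (V : Finset (Fin n)) (hV : V.card = 3) (G : Fin n → Bool → Prop)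
    (f : Fin 3 → Bool) :
    (∀ v ∈ V, G v (patFun V hV f v)) ↔ ∀ q : Fin 3, G (V.orderIsoOfFin hV q) (f q) := by
  constructor
  · intro h q
    have hq := h (V.orderIsoOfFin hV q) (V.orderIsoOfFin hV q).2
    rwa [patFun_apply] at hq
  · intro h v hv
    have hq := h ((V.orderIsoOfFin hV).symm ⟨v, hv⟩)
    rw [OrderIso.apply_symm_apply] at hq
    rw [patFun, dif_pos hv]
    exact hq

lemma sum_orderIso {M : Type*} [AddCommMonoid M] (V : Finset (Fin n)) (hV : V.card = 3)
    (f : Fin n → M) :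
    ∑ q : Fin 3, f (V.orderIsoOfFin hV q) = ∑ v ∈ V, f v := by
  rw [← Finset.sum_attach V f, ← Finset.univ_eq_attach]
  exact Fintype.sum_equiv (V.orderIsoOfFin hV).toEquiv
    (fun q => f (V.orderIsoOfFin hV q)) (fun x => f ↑x) (fun q => rfl)

end StmtOneAux3
section StmtOneAux4

open Finset

/-! ### The two branches of the distribution -/

abbrev TriSet (n : ℕ) := {V : Finset (Fin n) // V.card = 3}

abbrev OmA (n m : ℕ) := (Fin m ≃ TriSet n) × ((Fin n → Bool) × (Fin m → Bool × Bool))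

abbrev OmB (n m : ℕ) := TriSet n × (Fin m → (Fin 3 → Bool))

def instA {n m : ℕ} (ω : OmA n m) : SatInstance n m := fun i =>
  mkCl (ω.1 i).1 (ω.1 i).2
    (fun v => xor (ω.2.1 v) (patFun (ω.1 i).1 (ω.1 i).2 (pat3 (ω.2.2 i)) v))

def instB {n m : ℕ} (ω : OmB n m) : SatInstance n m := fun i =>
  mkCl ω.1.1 ω.1.2 (patFun ω.1.1 ω.1.2 (ω.2 i))

/-- The clause of a clause target `c`: its variable triple as an element of `TriSet`. -/
def triOf {n : ℕ} (c : Clause n) : TriSet n := ⟨clVars c, clVars_card c⟩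

lemma mkClA_eq_iff {n : ℕ} (V : Finset (Fin n)) (hV : V.card = 3) (τ : Fin n → Bool)
    (x : Bool × Bool) (c : Clause n) :
    mkCl V hV (fun v => xor (τ v) (patFun V hV (pat3 x) v)) = c ↔
      V = clVars c ∧ pat3 x = fun q =>
        xor (τ ((clVars c).orderIsoOfFin (clVars_card c) q))
            (clSgn c ((clVars c).orderIsoOfFin (clVars_card c) q)) := by
  rw [mkCl_eq_iff]
  constructor
  · rintro ⟨hV', hg⟩
    subst hV'
    refine ⟨rfl, ?_⟩
    have hq := (forall_patFun_iff (clVars c) hV (fun v b => xor (τ v) b = clSgn c v) (pat3 x)).1 hg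
    funext q
    have this' : xor (τ ((clVars c).orderIsoOfFin (clVars_card c) q)) (pat3 x q)
        = clSgn c ((clVars c).orderIsoOfFin (clVars_card c) q) := hq q
    rw [← this', ← Bool.xor_assoc, Bool.xor_self, Bool.false_xor]
  · rintro ⟨hV', hq⟩
    subst hV'
    refine ⟨rfl, ?_⟩
    apply (forall_patFun_iff (clVars c) hV (fun v b => xor (τ v) b = clSgn c v) (pat3 x)).2
    intro q
    show xor (τ ((clVars c).orderIsoOfFin (clVars_card c) q)) (pat3 x q)
        = clSgn c ((clVars c).orderIsoOfFin (clVars_card c) q)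
    rw [congrFun hq q, ← Bool.xor_assoc, Bool.xor_self, Bool.false_xor]

lemma instA_eq_iff {n m : ℕ} (ω : OmA n m) (i : Fin m) (c : Clause n) :
    instA ω i = c ↔ ω.1 i = triOf c ∧
      pat3 (ω.2.2 i) = fun q =>
        xor (ω.2.1 ((clVars c).orderIsoOfFin (clVars_card c) q))
            (clSgn c ((clVars c).orderIsoOfFin (clVars_card c) q)) := by
  rw [show instA ω i = mkCl (ω.1 i).1 (ω.1 i).2
      (fun v => xor (ω.2.1 v) (patFun (ω.1 i).1 (ω.1 i).2 (pat3 (ω.2.2 i)) v)) from rfl,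
    mkClA_eq_iff]
  constructor
  · rintro ⟨h1, h2⟩
    exact ⟨Subtype.ext h1, h2⟩
  · rintro ⟨h1, h2⟩
    exact ⟨congrArg Subtype.val h1, h2⟩

lemma mkClB_eq_iff {n : ℕ} (V : Finset (Fin n)) (hV : V.card = 3) (f : Fin 3 → Bool)
    (c : Clause n) :
    mkCl V hV (patFun V hV f) = c ↔
      V = clVars c ∧ f = fun q => clSgn c ((clVars c).orderIsoOfFin (clVars_card c) q) := by
  rw [mkCl_eq_iff]
  constructor
  · rintro ⟨hV', hg⟩
    subst hV'
    refine ⟨rfl, ?_⟩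
    have hq := (forall_patFun_iff (clVars c) hV (fun v b => b = clSgn c v) f).1 hg
    funext q
    exact hq q
  · rintro ⟨hV', hq⟩
    subst hV'
    refine ⟨rfl, ?_⟩
    apply (forall_patFun_iff (clVars c) hV (fun v b => b = clSgn c v) f).2
    intro q
    show f q = clSgn c ((clVars c).orderIsoOfFin (clVars_card c) q)
    exact congrFun hq q

lemma instB_eq_iff {n m : ℕ} (ω : OmB n m) (i : Fin m) (c : Clause n) :
    instB ω i = c ↔ ω.1 = triOf c ∧
      ω.2 i = fun q => clSgn c ((clVars c).orderIsoOfFin (clVars_card c) q) := by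
  rw [show instB ω i = mkCl ω.1.1 ω.1.2 (patFun ω.1.1 ω.1.2 (ω.2 i)) from rfl, mkClB_eq_iff]
  constructor
  · rintro ⟨h1, h2⟩
    exact ⟨Subtype.ext h1, h2⟩
  · rintro ⟨h1, h2⟩
    exact ⟨congrArg Subtype.val h1, h2⟩

/-! ### Pushforward distributions -/

noncomputable def push {Ω α : Type*} [Fintype Ω] [Fintype α] (f : Ω → α) : α → ℝ :=
  fun a => (Nat.card {ω // f ω = a} : ℝ) / (Nat.card Ω : ℝ)

lemma push_nonneg {Ω α : Type*} [Fintype Ω] [Fintype α] (f : Ω → α) (a : α) :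
    0 ≤ push f a := by
  unfold push
  positivity

lemma count_fiberwise {Ω α : Type*} [Fintype Ω] [Fintype α] (f : Ω → α) (P : α → Prop) :
    ∑ a ∈ Finset.univ.filter P, Nat.card {ω // f ω = a}
      = Nat.card {ω // P (f ω)} := by
  classical
  simp only [Nat.card_eq_fintype_card]
  rw [Fintype.card_subtype]
  rw [Finset.card_eq_sum_card_fiberwise
    (fun ω (hω : ω ∈ Finset.univ.filter fun ω => P (f ω)) =>
      Finset.mem_filter.2 ⟨mem_univ _, (Finset.mem_filter.1 hω).2⟩)]
  apply Finset.sum_congr rfl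
  intro a ha
  rw [Fintype.card_subtype]
  congr 1
  ext ω
  simp only [Finset.mem_filter, Finset.mem_univ, true_and]
  exact ⟨fun h => ⟨by rw [h]; exact (Finset.mem_filter.1 ha).2, h⟩, fun h => h.2⟩

lemma pr_push {Ω α : Type*} [Fintype Ω] [Fintype α] (f : Ω → α) (P : α → Prop) :
    pr (push f) P = (Nat.card {ω // P (f ω)} : ℝ) / (Nat.card Ω : ℝ) := by
  unfold pr push
  rw [← Finset.sum_div]
  congr 1
  rw [← count_fiberwise f P]
  push_cast
  rfl

lemma sum_count {Ω α : Type*} [Fintype Ω] [Fintype α] (f : Ω → α) :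
    ∑ a : α, Nat.card {ω // f ω = a} = Nat.card Ω := by
  classical
  simp only [Nat.card_eq_fintype_card]
  have h := Finset.card_eq_sum_card_fiberwise
    (s := (Finset.univ : Finset Ω)) (t := (Finset.univ : Finset α)) (f := f)
    (fun ω _ => mem_univ _)
  rw [Finset.card_univ] at h
  simp only [Fintype.card_subtype]
  exact h.symm

lemma sum_push {Ω α : Type*} [Fintype Ω] [Nonempty Ω] [Fintype α] (f : Ω → α) :
    ∑ a, push f a = 1 := by
  unfold push
  rw [← Finset.sum_div, ← Nat.cast_sum, sum_count,
    div_self (by exact_mod_cast (Nat.card_pos (α := Ω)).ne')]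

lemma pr_mix {α : Type*} [Fintype α] (x y : ℝ) (D₁ D₂ : α → ℝ) (P : α → Prop) :
    pr (fun a => x * D₁ a + y * D₂ a) P = x * pr D₁ P + y * pr D₂ P := by
  unfold pr
  rw [Finset.sum_add_distrib, Finset.mul_sum, Finset.mul_sum]

lemma pr_congr {α : Type*} [Fintype α] (D : α → ℝ) {P Q : α → Prop} (h : ∀ a, P a ↔ Q a) :
    pr D P = pr D Q := by
  unfold pr
  congr 1
  exact Finset.filter_congr fun a _ => h a

end StmtOneAux4
section StmtOneAux5

open Finset

/-- The target sign function for branch A. -/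
def sgnTarget {n : ℕ} (t : Clause n) (τ : Fin n → Bool) : Fin 3 → Bool :=
  fun q => xor (τ ((clVars t).orderIsoOfFin (clVars_card t) q))
               (clSgn t ((clVars t).orderIsoOfFin (clVars_card t) q))

lemma card_pat3_parity {n : ℕ} (t : Clause n) (τ : Fin n → Bool) :
    Nat.card {x : Bool × Bool // pat3 x = sgnTarget t τ}
      = if parW (clVars t) τ = 1 + parW (clVars t) (fun v => clSgn t v) then 1 else 0 := by
  rw [Nat.card_eq_fintype_card, card_pat3]
  have hsum3 : zvb (sgnTarget t τ 0) + zvb (sgnTarget t τ 1) + zvb (sgnTarget t τ 2)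
      = parW (clVars t) τ + parW (clVars t) (fun v => clSgn t v) := by
    rw [show zvb (sgnTarget t τ 0) + zvb (sgnTarget t τ 1) + zvb (sgnTarget t τ 2)
        = ∑ q : Fin 3, zvb (sgnTarget t τ q) from
        (Fin.sum_univ_three (fun q => zvb (sgnTarget t τ q))).symm]
    simp only [sgnTarget, zvb_xor]
    rw [Finset.sum_add_distrib]
    rw [sum_orderIso (clVars t) (clVars_card t) (fun v => zvb (τ v)),
      sum_orderIso (clVars t) (clVars_card t) (fun v => zvb (clSgn t v))]
    rfl
  have hcond : (zvb (sgnTarget t τ 0) + zvb (sgnTarget t τ 1) + zvb (sgnTarget t τ 2) = 1)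
      ↔ (parW (clVars t) τ = 1 + parW (clVars t) (fun v => clSgn t v)) := by
    rw [hsum3]
    exact zmod2_add_eq_one _ _
  by_cases h : parW (clVars t) τ = 1 + parW (clVars t) (fun v => clSgn t v)
  · rw [if_pos h, if_pos (hcond.2 h)]
  · rw [if_neg h, if_neg (fun hc => h (hcond.1 hc))]

lemma ite_one_mul_ite_one (p q : Prop) [Decidable p] [Decidable q] :
    (if p then 1 else 0) * (if q then 1 else 0) = if p ∧ q then (1 : ℕ) else 0 := by
  by_cases hp : p <;> by_cases hq : q <;> simp [hp, hq]

/-- Branch A pair count, case of distinct variable triples. -/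
lemma countA_ne {n m : ℕ} (hm : 2 ≤ m) {i₁ i₂ : Fin m} (hne : i₁ ≠ i₂) (t₀ t₁ : Clause n)
    (hW : clVars t₀ ≠ clVars t₁) :
    Nat.card {ω : OmA n m // instA ω i₁ = t₀ ∧ instA ω i₂ = t₁}
        * ((Nat.card (TriSet n) * Nat.card (TriSet n) - Nat.card (TriSet n)) * 64)
      = Nat.card (OmA n m) := by
  classical
  -- Split the event into the permutation part and the sign part.
  have e1 : {ω : OmA n m // instA ω i₁ = t₀ ∧ instA ω i₂ = t₁}
      ≃ {π : Fin m ≃ TriSet n // π i₁ = triOf t₀ ∧ π i₂ = triOf t₁}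
        × {p : (Fin n → Bool) × (Fin m → Bool × Bool) //
            pat3 (p.2 i₁) = sgnTarget t₀ p.1 ∧ pat3 (p.2 i₂) = sgnTarget t₁ p.1} := by
    refine (Equiv.subtypeEquivRight fun ω => ?_).trans
      (Equiv.subtypeProdEquivProd
        (p := fun π : Fin m ≃ TriSet n => π i₁ = triOf t₀ ∧ π i₂ = triOf t₁)
        (q := fun p : (Fin n → Bool) × (Fin m → Bool × Bool) =>
          pat3 (p.2 i₁) = sgnTarget t₀ p.1 ∧ pat3 (p.2 i₂) = sgnTarget t₁ p.1))
    rw [instA_eq_iff, instA_eq_iff]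
    show _ ↔ (_ ∧ _) ∧ (_ ∧ _)
    tauto
  rw [Nat.card_congr e1, Nat.card_prod]
  -- The sign part.
  have e2 : Nat.card {p : (Fin n → Bool) × (Fin m → Bool × Bool) //
        pat3 (p.2 i₁) = sgnTarget t₀ p.1 ∧ pat3 (p.2 i₂) = sgnTarget t₁ p.1}
      = ∑ τ : Fin n → Bool,
          Nat.card {r : Fin m → Bool × Bool //
            pat3 (r i₁) = sgnTarget t₀ τ ∧ pat3 (r i₂) = sgnTarget t₁ τ} :=
    card_prod_subtype_sigma (α := Fin n → Bool) (β := Fin m → Bool × Bool)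
      (fun τ r => pat3 (r i₁) = sgnTarget t₀ τ ∧ pat3 (r i₂) = sgnTarget t₁ τ)
  have e3 : ∀ τ : Fin n → Bool,
      Nat.card {r : Fin m → Bool × Bool //
          pat3 (r i₁) = sgnTarget t₀ τ ∧ pat3 (r i₂) = sgnTarget t₁ τ}
        = (if parW (clVars t₀) τ = 1 + parW (clVars t₀) (fun v => clSgn t₀ v) then 1 else 0)
          * (if parW (clVars t₁) τ = 1 + parW (clVars t₁) (fun v => clSgn t₁ v) then 1 else 0)
          * 4 ^ (m - 2) := by
    intro τ
    rw [card_pi_two hne (fun x => pat3 x = sgnTarget t₀ τ) (fun x => pat3 x = sgnTarget t₁ τ),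
      card_pat3_parity, card_pat3_parity]
    congr 2
    · rw [Nat.card_eq_fintype_card]
      simp
    · rw [Nat.card_eq_fintype_card, Fintype.card_fin]
  -- Count of assignments with the two prescribed parities.
  obtain ⟨u, hu0, hu1⟩ := Finset.not_subset.1
    (fun hsub => hW (Finset.eq_of_subset_of_card_le hsub
      (le_of_eq ((clVars_card t₁).trans (clVars_card t₀).symm))))
  obtain ⟨w, hw1, hw0⟩ := Finset.not_subset.1
    (fun hsub => (hW ∘ Eq.symm) (Finset.eq_of_subset_of_card_le hsub
      (le_of_eq ((clVars_card t₀).trans (clVars_card t₁).symm))))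
  have e4 : ∑ τ : Fin n → Bool,
      ((if parW (clVars t₀) τ = 1 + parW (clVars t₀) (fun v => clSgn t₀ v) then 1 else 0)
        * (if parW (clVars t₁) τ = 1 + parW (clVars t₁) (fun v => clSgn t₁ v) then 1 else 0)
        * 4 ^ (m - 2))
      = Nat.card {τ : Fin n → Bool //
            parW (clVars t₀) τ = 1 + parW (clVars t₀) (fun v => clSgn t₀ v)
          ∧ parW (clVars t₁) τ = 1 + parW (clVars t₁) (fun v => clSgn t₁ v)} * 4 ^ (m - 2) := by
    rw [← Finset.sum_mul]
    congr 1
    rw [Nat.card_eq_fintype_card, Fintype.card_subtype, Finset.card_filter]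
    apply Finset.sum_congr rfl
    intro τ _
    rw [ite_one_mul_ite_one]
  have hNP := card_parity_pair hu0 hu1 hw1 hw0
    (1 + parW (clVars t₀) (fun v => clSgn t₀ v)) (1 + parW (clVars t₁) (fun v => clSgn t₁ v))
  have hFp := card_perm_fiber hne (show triOf t₀ ≠ triOf t₁ from
    fun h => hW (congrArg Subtype.val h))
  have hNA : Nat.card (OmA n m)
      = Nat.card (Fin m ≃ TriSet n) * (2 ^ n * 4 ^ m) := by
    rw [Nat.card_prod, Nat.card_prod]
    congr 1
    rw [Nat.card_eq_fintype_card, Nat.card_eq_fintype_card,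
      Fintype.card_fun, Fintype.card_fun]
    norm_num
  rw [e2, Finset.sum_congr rfl (fun τ _ => e3 τ), e4, hNA, ← hFp, ← hNP]
  have h4m : 4 ^ m = 4 ^ (m - 2) * 16 := by
    rw [show m = m - 2 + 2 from (Nat.sub_add_cancel hm).symm]
    rw [pow_add]
    norm_num
  rw [h4m]
  try ring

/-- Branch A pair count vanishes when the two target clauses share their variable triple. -/
lemma countA_zero {n m : ℕ} {i₁ i₂ : Fin m} (hne : i₁ ≠ i₂) (t₀ t₁ : Clause n)
    (hW : clVars t₀ = clVars t₁) :
    Nat.card {ω : OmA n m // instA ω i₁ = t₀ ∧ instA ω i₂ = t₁} = 0 := by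
  rw [Nat.card_eq_zero]
  left
  refine ⟨fun ω => ?_⟩
  obtain ⟨ω, h1, h2⟩ := ω
  have e1 := ((instA_eq_iff ω i₁ t₀).1 h1).1
  have e2 := ((instA_eq_iff ω i₂ t₁).1 h2).1
  have ht : triOf t₀ = triOf t₁ := Subtype.ext hW
  exact hne (ω.1.injective (by rw [e1, e2, ht]))

/-- Branch B pair count vanishes when the variable triples differ. -/
lemma countB_zero {n m : ℕ} {i₁ i₂ : Fin m} (t₀ t₁ : Clause n)
    (hW : clVars t₀ ≠ clVars t₁) :
    Nat.card {ω : OmB n m // instB ω i₁ = t₀ ∧ instB ω i₂ = t₁} = 0 := by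
  rw [Nat.card_eq_zero]
  left
  refine ⟨fun ω => ?_⟩
  obtain ⟨ω, h1, h2⟩ := ω
  have e1 := ((instB_eq_iff ω i₁ t₀).1 h1).1
  have e2 := ((instB_eq_iff ω i₂ t₁).1 h2).1
  exact hW (congrArg Subtype.val (e1.symm.trans e2))

/-- Branch B pair count, case of equal variable triples. -/
lemma countB_eq {n m : ℕ} (hm : 2 ≤ m) {i₁ i₂ : Fin m} (hne : i₁ ≠ i₂) (t₀ t₁ : Clause n)
    (hW : clVars t₀ = clVars t₁) :
    Nat.card {ω : OmB n m // instB ω i₁ = t₀ ∧ instB ω i₂ = t₁}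
        * (Nat.card (TriSet n) * 64)
      = Nat.card (OmB n m) := by
  classical
  have ht : triOf t₀ = triOf t₁ := Subtype.ext hW
  have e1 : {ω : OmB n m // instB ω i₁ = t₀ ∧ instB ω i₂ = t₁}
      ≃ {T : TriSet n // T = triOf t₀}
        × {s : Fin m → (Fin 3 → Bool) //
            s i₁ = (fun q => clSgn t₀ ((clVars t₀).orderIsoOfFin (clVars_card t₀) q))
          ∧ s i₂ = (fun q => clSgn t₁ ((clVars t₁).orderIsoOfFin (clVars_card t₁) q))} := by
    refine (Equiv.subtypeEquivRight fun ω => ?_).trans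
      (Equiv.subtypeProdEquivProd
        (p := fun T : TriSet n => T = triOf t₀)
        (q := fun s : Fin m → (Fin 3 → Bool) =>
          s i₁ = (fun q => clSgn t₀ ((clVars t₀).orderIsoOfFin (clVars_card t₀) q))
          ∧ s i₂ = (fun q => clSgn t₁ ((clVars t₁).orderIsoOfFin (clVars_card t₁) q))))
    rw [instB_eq_iff, instB_eq_iff, ← ht]
    show _ ↔ _ ∧ (_ ∧ _)
    tauto
  rw [Nat.card_congr e1, Nat.card_prod,
    card_pi_two hne
      (fun x => x = (fun q => clSgn t₀ ((clVars t₀).orderIsoOfFin (clVars_card t₀) q)))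
      (fun x => x = (fun q => clSgn t₁ ((clVars t₁).orderIsoOfFin (clVars_card t₁) q)))]
  have h1 : Nat.card {T : TriSet n // T = triOf t₀} = 1 := by
    rw [Nat.card_eq_fintype_card]
    exact Fintype.card_subtype_eq _
  have h2 : Nat.card {x : Fin 3 → Bool //
      x = (fun q => clSgn t₀ ((clVars t₀).orderIsoOfFin (clVars_card t₀) q))} = 1 := by
    rw [Nat.card_eq_fintype_card]
    exact Fintype.card_subtype_eq _
  have h3 : Nat.card {x : Fin 3 → Bool //
      x = (fun q => clSgn t₁ ((clVars t₁).orderIsoOfFin (clVars_card t₁) q))} = 1 := by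
    rw [Nat.card_eq_fintype_card]
    exact Fintype.card_subtype_eq _
  rw [h1, h2, h3]
  have hNB : Nat.card (OmB n m) = Nat.card (TriSet n) * 8 ^ m := by
    rw [Nat.card_prod]
    congr 1
    rw [Nat.card_eq_fintype_card, Fintype.card_fun]
    norm_num
  rw [hNB]
  have hc8 : Nat.card (Fin 3 → Bool) = 8 := by
    rw [Nat.card_eq_fintype_card, Fintype.card_fun]
    norm_num
  have hcm : Nat.card (Fin m) = m := by
    rw [Nat.card_eq_fintype_card, Fintype.card_fin]
  rw [hc8, hcm]
  have h8m : 8 ^ m = 8 ^ (m - 2) * 64 := by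
    rw [show m = m - 2 + 2 from (Nat.sub_add_cancel hm).symm]
    rw [pow_add]
    norm_num
  rw [h8m]
  try ring

/-- Every instance in the support of branch A is satisfiable. -/
lemma instA_SAT {n m : ℕ} (ω : OmA n m) : SAT (instA ω) := by
  refine ⟨fun v => !(ω.2.1 v), fun i => ?_⟩
  obtain ⟨q, hq⟩ := pat3_has_true (ω.2.2 i)
  refine ⟨(((((ω.1 i).1.orderIsoOfFin (ω.1 i).2) q : Fin n)),
           xor (ω.2.1 ((((ω.1 i).1.orderIsoOfFin (ω.1 i).2) q : Fin n)))
               (patFun (ω.1 i).1 (ω.1 i).2 (pat3 (ω.2.2 i))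
                 ((((ω.1 i).1.orderIsoOfFin (ω.1 i).2) q : Fin n)))), ?_, ?_⟩
  · exact (mem_mkCl (ω.1 i).1 (ω.1 i).2 _ _).2 ⟨(((ω.1 i).1.orderIsoOfFin (ω.1 i).2) q).2, rfl⟩
  · show (!(ω.2.1 _)) = xor (ω.2.1 _) (patFun (ω.1 i).1 (ω.1 i).2 (pat3 (ω.2.2 i)) _)
    rw [patFun_apply (ω.1 i).1 (ω.1 i).2 (pat3 (ω.2.2 i)) q, hq]
    cases ω.2.1 (((ω.1 i).1.orderIsoOfFin (ω.1 i).2) q : Fin n) <;> rfl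

end StmtOneAux5
/-- For every integer `n ≥ 4` there exists a distribution `D ∈ 𝔇₂(n, binom(n,3))`
with `Pr_{C∼D}[SAT(C)] ≥ 1 − binom(n,3)⁻¹`. -/
theorem stmt1 (n : ℕ) (hn : 4 ≤ n) :
    ∃ D : SatInstance n (n.choose 3) → ℝ,
      IsDistribution D ∧ KWiseUniform n (n.choose 3) 2 D ∧
      1 - (n.choose 3 : ℝ)⁻¹ ≤ pr D SAT := by
  classical
  set m := n.choose 3 with hmdef
  have hm4 : 4 ≤ m := by
    have h1 : Nat.choose 4 3 ≤ n.choose 3 := Nat.choose_le_choose 3 hn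
    simpa using h1
  have hmR : (4 : ℝ) ≤ (m : ℝ) := by exact_mod_cast hm4
  have hm0 : (m : ℝ) ≠ 0 := by positivity
  have hTF : Fintype.card (TriSet n) = m := by
    rw [Fintype.card_finset_len, Fintype.card_fin]
  have hT : Nat.card (TriSet n) = m := by
    rw [Nat.card_eq_fintype_card, hTF]
  have hEquivNe : Nonempty (Fin m ≃ TriSet n) :=
    Fintype.card_eq.1 (by rw [Fintype.card_fin, hTF])
  have hTriNe : Nonempty (TriSet n) := by
    rw [← Fintype.card_pos_iff, hTF]
    omega
  obtain ⟨e0⟩ := hEquivNe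
  obtain ⟨T0⟩ := hTriNe
  haveI hOA : Nonempty (OmA n m) := ⟨⟨e0, fun _ => true, fun _ => (true, true)⟩⟩
  haveI hOB : Nonempty (OmB n m) := ⟨⟨T0, fun _ _ => true⟩⟩
  have hNApos : (0 : ℝ) < (Nat.card (OmA n m) : ℝ) := by exact_mod_cast Nat.card_pos
  have hNBpos : (0 : ℝ) < (Nat.card (OmB n m) : ℝ) := by exact_mod_cast Nat.card_pos
  have hw1 : (0 : ℝ) ≤ 1 - 1 / (m : ℝ) := by
    have : (1 : ℝ) / m ≤ 1 := by
      rw [div_le_one (by linarith)]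
      linarith
    linarith
  have hw2 : (0 : ℝ) ≤ 1 / (m : ℝ) := by positivity
  refine ⟨fun C => (1 - 1 / (m : ℝ)) * push (instA (n := n) (m := m)) C
      + (1 / (m : ℝ)) * push (instB (n := n) (m := m)) C, ⟨?_, ?_⟩, ?_, ?_⟩
  · -- nonnegativity
    intro a
    exact add_nonneg (mul_nonneg hw1 (push_nonneg _ _)) (mul_nonneg hw2 (push_nonneg _ _))
  · -- total mass one
    rw [Finset.sum_add_distrib, ← Finset.mul_sum, ← Finset.mul_sum, sum_push, sum_push]
    ring
  · -- pairwise uniformity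
    intro idx hinj t
    have hne : idx 0 ≠ idx 1 := fun h => absurd (hinj h) (by decide)
    have hpr : pr (fun C => (1 - 1 / (m : ℝ)) * push (instA (n := n) (m := m)) C
        + (1 / (m : ℝ)) * push (instB (n := n) (m := m)) C)
          (fun C => ∀ j, C (idx j) = t j)
        = pr (fun C => (1 - 1 / (m : ℝ)) * push (instA (n := n) (m := m)) C
        + (1 / (m : ℝ)) * push (instB (n := n) (m := m)) C)
          (fun C => C (idx 0) = t 0 ∧ C (idx 1) = t 1) := by
      apply pr_congr
      intro C
      constructor
      · intro h
        exact ⟨h 0, h 1⟩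
      · rintro ⟨h0, h1⟩ j
        fin_cases j
        · exact h0
        · exact h1
    rw [hpr, pr_mix, pr_push, pr_push]
    by_cases hW : clVars (t 0) = clVars (t 1)
    · -- same variable triple: only branch B contributes
      have hA := countA_zero hne (t 0) (t 1) hW
      have hB := countB_eq (by omega) hne (t 0) (t 1) hW
      rw [hT] at hB
      rw [hA]
      have hBR : (Nat.card {ω : OmB n m // instB ω (idx 0) = t 0 ∧ instB ω (idx 1) = t 1} : ℝ)
          * (m * 64) = (Nat.card (OmB n m) : ℝ) := by exact_mod_cast hB
      have hcB0 : (Nat.card {ω : OmB n m //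
          instB ω (idx 0) = t 0 ∧ instB ω (idx 1) = t 1} : ℝ) ≠ 0 := by
        intro h0
        rw [h0, zero_mul] at hBR
        exact hNBpos.ne' hBR.symm
      rw [Nat.cast_zero, zero_div, mul_zero, zero_add, ← hBR,
        div_mul_cancel_left₀ hcB0]
      rw [show ((m : ℝ) * 64)⁻¹ = 1 / (m * 64) from (one_div _).symm]
      rw [← hmdef]
      field_simp
      ring
    · -- distinct variable triples: only branch A contributes
      have hA := countA_ne (by omega) hne (t 0) (t 1) hW
      have hB := countB_zero (i₁ := idx 0) (i₂ := idx 1) (t 0) (t 1) hW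
      rw [hT] at hA
      rw [hB]
      have hsub : ((m * m - m : ℕ) : ℝ) = (m : ℝ) * m - m := by
        have : m ≤ m * m := Nat.le_mul_of_pos_left m (by omega)
        push_cast [this]
        ring
      have hAR : (Nat.card {ω : OmA n m // instA ω (idx 0) = t 0 ∧ instA ω (idx 1) = t 1} : ℝ)
          * (((m : ℝ) * m - m) * 64) = (Nat.card (OmA n m) : ℝ) := by
        rw [← hsub]
        exact_mod_cast hA
      have hcA0 : (Nat.card {ω : OmA n m //
          instA ω (idx 0) = t 0 ∧ instA ω (idx 1) = t 1} : ℝ) ≠ 0 := by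
        intro h0
        rw [h0, zero_mul] at hAR
        exact hNApos.ne' hAR.symm
      have hmm0 : (m : ℝ) * m - m ≠ 0 := by nlinarith
      rw [Nat.cast_zero, zero_div, mul_zero, add_zero, ← hAR,
        div_mul_cancel_left₀ hcA0]
      rw [show (((m : ℝ) * m - m) * 64)⁻¹ = 1 / ((m * m - m) * 64) from (one_div _).symm]
      rw [← hmdef]
      field_simp
      have hm1 : (-1 + (m : ℝ)) ≠ 0 := by intro h; linarith
      ring_nf
      field_simp
      ring
  · -- satisfiability bound
    rw [pr_mix, pr_push, pr_push]
    have h1 : Nat.card {ω : OmA n m // SAT (instA ω)} = Nat.card (OmA n m) :=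
      Nat.card_congr (Equiv.subtypeUnivEquiv instA_SAT)
    rw [h1, div_self hNApos.ne']
    have h2 : (0 : ℝ) ≤ (Nat.card {ω : OmB n m // SAT (instB ω)} : ℝ)
        / (Nat.card (OmB n m) : ℝ) := by positivity
    have h3 : 1 - (m : ℝ)⁻¹ = (1 - 1 / (m : ℝ)) * 1 := by
      rw [one_div]
      ring
    rw [h3]
    nlinarith [mul_nonneg hw2 h2]
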